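/- Assume 1/2 ∈ σ(K₀). Then: (i) σ(K) = σ(K₀); (ii) 1/2 ∈ σ(K); and (iii) for every λ ∈ ℂ \ {0, 1/2} one has the equality of eigenspaces ker(λI − K) = ker(λI − K₀); in particular dim ker(λI − K) = dim ker(λI − K₀) for such λ. -/

import Mathlib

open ContinuousLinearMap

/-- Sherman–Morrison style lemma: rank-one perturbation preserves invertibility. -/
lemma aux_isUnit {X : Type*} [NormedAddCommGroup X] [NormedSpace ℂ X]
    (A : X →L[ℂ] X) (ℓ : X →L[ℂ] ℂ) (v : X) (hv : ℓ v = 0)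
    (hA : ∀ φ : X, ℓ (A φ) = (1 / 2 : ℂ) * ℓ φ)
    (B : X →L[ℂ] X) (hB : ∀ φ : X, B φ = A φ + ℓ φ • v)
    (lam : ℂ) (hlam : lam ≠ 1 / 2)
    (h : IsUnit (lam • (1 : X →L[ℂ] X) - A)) :
    IsUnit (lam • (1 : X →L[ℂ] X) - B) := by
  obtain ⟨u, hu⟩ := h
  set R : X →L[ℂ] X := ↑u⁻¹ with hRdef
  have hRr : ∀ x : X, (lam • (1 : X →L[ℂ] X) - A) (R x) = x := by
    intro x
    have : ((lam • (1 : X →L[ℂ] X) - A) * R) x = (1 : X →L[ℂ] X) x := by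
      rw [← hu, Units.mul_inv]
    simpa [mul_apply] using this
  have hRl : ∀ x : X, R ((lam • (1 : X →L[ℂ] X) - A) x) = x := by
    intro x
    have : (R * (lam • (1 : X →L[ℂ] X) - A)) x = (1 : X →L[ℂ] X) x := by
      rw [← hu, Units.inv_mul]
    simpa [mul_apply] using this
  have hℓA : ∀ y : X, ℓ ((lam • (1 : X →L[ℂ] X) - A) y) = (lam - 1 / 2) * ℓ y := by
    intro y
    simp [map_sub, hA, sub_mul, smul_apply, smul_eq_mul]
  have hRv : ℓ (R v) = 0 := by
    have h0 : (lam - 1 / 2) * ℓ (R v) = 0 := by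
      rw [← hℓA, hRr, hv]
    have : lam - 1 / 2 ≠ 0 := sub_ne_zero.mpr hlam
    exact (mul_eq_zero.mp h0).resolve_left this
  set S : X →L[ℂ] X := R + R.comp ((ℓ.smulRight v).comp R) with hSdef
  refine isUnit_iff_exists.mpr ⟨S, ?_, ?_⟩
  · ext φ
    have hSφ : S φ = R φ + ℓ (R φ) • R v := by
      simp [hSdef, smulRight_apply, map_smul]
    have hℓSφ : ℓ (S φ) = ℓ (R φ) := by
      simp [hSφ, hRv]
    have : (lam • (1 : X →L[ℂ] X) - B) (S φ) = φ := by
      have hBS : (lam • (1 : X →L[ℂ] X) - B) (S φ)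
          = (lam • (1 : X →L[ℂ] X) - A) (S φ) - ℓ (S φ) • v := by
        simp [hB, sub_apply, smul_apply]; abel
      rw [hBS, hSφ, map_add, map_smul, hRr, hRr]
      simp [map_add, map_smul, hRv]
    simpa [mul_apply] using this
  · ext φ
    have h1 : (lam • (1 : X →L[ℂ] X) - B) φ
        = (lam • (1 : X →L[ℂ] X) - A) φ - ℓ φ • v := by
      simp [hB, sub_apply, smul_apply]; abel
    have hS : ∀ x : X, S x = R x + ℓ (R x) • R v := by
      intro x; simp [hSdef, smulRight_apply, map_smul]
    have : S ((lam • (1 : X →L[ℂ] X) - B) φ) = φ := by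
      rw [h1, map_sub, hS, hS, hRl]
      have h2 : ℓ (R ((lam • (1 : X →L[ℂ] X) - A) φ)) = ℓ φ := by rw [hRl]
      simp [map_smul, hRv, h2]
    simpa [mul_apply] using this

theorem statement2 {X : Type*} [NormedAddCommGroup X] [NormedSpace ℂ X]
    [CompleteSpace X] (hinf : ¬ FiniteDimensional ℂ X)
    (K₀ : X →L[ℂ] X) (hK₀compact : IsCompactOperator (⇑K₀))
    (ℓ : X →L[ℂ] ℂ) (hℓ : ℓ ≠ 0) (hℓK₀ : ∀ φ : X, ℓ (K₀ φ) = (1 / 2 : ℂ) * ℓ φ)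
    (v : X) (hv : ℓ v = 0)
    (K : X →L[ℂ] X) (hK : ∀ φ : X, K φ = K₀ φ + ℓ φ • v)
    (hhalf : (1 / 2 : ℂ) ∈ spectrum ℂ K₀) :
    spectrum ℂ K = spectrum ℂ K₀ ∧
    (1 / 2 : ℂ) ∈ spectrum ℂ K ∧
    ∀ lam : ℂ, lam ≠ 0 → lam ≠ 1 / 2 →
      LinearMap.ker ((lam • (1 : X →L[ℂ] X) - K : X →L[ℂ] X) : X →ₗ[ℂ] X) =
        LinearMap.ker ((lam • (1 : X →L[ℂ] X) - K₀ : X →L[ℂ] X) : X →ₗ[ℂ] X) ∧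
      Module.rank ℂ (LinearMap.ker ((lam • (1 : X →L[ℂ] X) - K : X →L[ℂ] X) : X →ₗ[ℂ] X)) =
        Module.rank ℂ (LinearMap.ker ((lam • (1 : X →L[ℂ] X) - K₀ : X →L[ℂ] X) : X →ₗ[ℂ] X)) := by
  have hℓK : ∀ φ : X, ℓ (K φ) = (1 / 2 : ℂ) * ℓ φ := by
    intro φ; rw [hK]; simp [hℓK₀, hv]
  have hK₀' : ∀ φ : X, K₀ φ = K φ + ℓ φ • (-v) := by
    intro φ; rw [hK]; simp
  have halg : ∀ (lam : ℂ) (T : X →L[ℂ] X),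
      algebraMap ℂ (X →L[ℂ] X) lam - T = lam • (1 : X →L[ℂ] X) - T := by
    intro lam T; rw [Algebra.algebraMap_eq_smul_one]
  -- (ii) 1/2 ∈ σ(K)
  have hhalfK : (1 / 2 : ℂ) ∈ spectrum ℂ K := by
    rw [spectrum.mem_iff]
    intro hu
    obtain ⟨u, huu⟩ := hu
    apply hℓ
    ext x
    have hsurj : ∃ y : X, (algebraMap ℂ (X →L[ℂ] X) (1/2) - K) y = x := by
      refine ⟨(↑u⁻¹ : X →L[ℂ] X) x, ?_⟩
      have : ((algebraMap ℂ (X →L[ℂ] X) (1/2) - K) * ↑u⁻¹) x = (1 : X →L[ℂ] X) x := by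
        rw [← huu, Units.mul_inv]
      simpa [mul_apply] using this
    obtain ⟨y, hy⟩ := hsurj
    have : ℓ ((algebraMap ℂ (X →L[ℂ] X) (1/2) - K) y) = 0 := by
      rw [halg]
      simp [map_sub, hℓK, smul_apply, smul_eq_mul]
    rw [hy] at this
    simpa using this
  -- (i) σ(K) = σ(K₀)
  have hspec : spectrum ℂ K = spectrum ℂ K₀ := by
    ext lam
    by_cases hl : lam = 1 / 2
    · subst hl; exact ⟨fun _ => hhalf, fun _ => hhalfK⟩
    · rw [spectrum.mem_iff, spectrum.mem_iff, halg, halg]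
      constructor
      · intro h1 h2
        exact h1 (aux_isUnit K₀ ℓ v hv hℓK₀ K hK lam hl h2)
      · intro h1 h2
        exact h1 (aux_isUnit K ℓ (-v) (by simp [hv]) hℓK K₀ hK₀' lam hl h2)
  refine ⟨hspec, hhalfK, ?_⟩
  intro lam _ hl
  have hker : LinearMap.ker ((lam • (1 : X →L[ℂ] X) - K : X →L[ℂ] X) : X →ₗ[ℂ] X) =
      LinearMap.ker ((lam • (1 : X →L[ℂ] X) - K₀ : X →L[ℂ] X) : X →ₗ[ℂ] X) := by
    ext φ
    simp only [LinearMap.mem_ker, ContinuousLinearMap.coe_coe, sub_apply, smul_apply,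
      one_apply, sub_eq_zero]
    constructor
    · intro hφ
      have hℓφ : ℓ φ = 0 := by
        have : lam * ℓ φ = (1/2 : ℂ) * ℓ φ := by
          have := congrArg ℓ hφ
          simpa [map_smul, hℓK, smul_eq_mul] using this
        have h0 : (lam - 1/2) * ℓ φ = 0 := by linear_combination this
        exact (mul_eq_zero.mp h0).resolve_left (sub_ne_zero.mpr hl)
      rw [hφ, hK, hℓφ]; simp
    · intro hφ
      have hℓφ : ℓ φ = 0 := by
        have : lam * ℓ φ = (1/2 : ℂ) * ℓ φ := by
          have := congrArg ℓ hφ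
          simpa [map_smul, hℓK₀, smul_eq_mul] using this
        have h0 : (lam - 1/2) * ℓ φ = 0 := by linear_combination this
        exact (mul_eq_zero.mp h0).resolve_left (sub_ne_zero.mpr hl)
      rw [hφ, hK, hℓφ]; simp
  exact ⟨hker, by rw [hker]⟩
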